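/- Let X be a finite set of size n partitioned into classes X₁, …, X_m, each of size at most k, where k ≥ 1. Consider the graph whose vertices are the bijections ρ : X → {1, …, n} and whose edges join ρ to the ranking obtained from ρ by composing with the transposition of values r and r+1, for each r ∈ {1, …, n−1} such that ρ⁻¹(r) and ρ⁻¹(r+1) lie in the same partition class. Then this graph has at least n!/(2·(k!)²) connected components. -/

import Mathlib

open Finset

namespace Stmt19Aux
open scoped Classical

variable {n : ℕ} {ι : Type*}

open Stmt19Aux

/-- set of "run starts" of a label sequence -/
noncomputable def SSet (L : Fin n → ι) : Finset (Fin n) :=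
  Finset.univ.filter fun s => s.1 = 0 ∨
    L ⟨s.1 - 1, lt_of_le_of_lt (Nat.sub_le _ _) s.2⟩ ≠ L s

/-- set of adjacent same-label positions -/
noncomputable def dSet (L : Fin n → ι) : Finset (Fin n) :=
  Finset.univ.filter fun r => ∃ h : r.1 + 1 < n, L r = L ⟨r.1 + 1, h⟩

def stP (L : Fin n → ι) (m : ℕ) : Prop := ∃ h : m < n, (⟨m, h⟩ : Fin n) ∈ SSet L

/-- start of the run containing r -/
noncomputable def stF (L : Fin n → ι) (r : Fin n) : Fin n :=
  ⟨Nat.findGreatest (stP L) r.1, lt_of_le_of_lt (Nat.findGreatest_le _) r.2⟩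

variable {L : Fin n → ι}

lemma stP_zero (hn : 0 < n) : stP L 0 := ⟨hn, by simp [SSet]⟩

lemma stF_le (r : Fin n) : (stF L r).1 ≤ r.1 := Nat.findGreatest_le _

lemma stF_mem (r : Fin n) : stF L r ∈ SSet L := by
  have h0 : stP L 0 := stP_zero (Nat.pos_of_ne_zero (by rintro rfl; exact (Nat.not_lt_zero _ r.2)))
  obtain ⟨h, hmem⟩ := Nat.findGreatest_spec (Nat.zero_le r.1) h0
  exact hmem

lemma stF_between (r : Fin n) : ∀ (m : ℕ) (hm : m < n), (stF L r).1 ≤ m → m ≤ r.1 →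
    L ⟨m, hm⟩ = L (stF L r) := by
  intro m
  induction m with
  | zero =>
    intro hm h0 _
    have he : stF L r = ⟨0, hm⟩ := Fin.ext (Nat.le_zero.mp h0)
    rw [he]
  | succ p ih =>
    intro hm hle hler
    rcases Nat.lt_or_ge (stF L r).1 (p+1) with hlt | hge
    · -- p+1 is not a start
      have hnot : ¬ stP L (p+1) := Nat.findGreatest_is_greatest hlt hler
      have hpn : p < n := lt_trans (Nat.lt_succ_self p) hm
      have hmem : (⟨p+1, hm⟩ : Fin n) ∉ SSet L := fun h => hnot ⟨hm, h⟩
      have : L ⟨p, hpn⟩ = L ⟨p+1, hm⟩ := by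
        by_contra hne
        apply hmem
        simp only [SSet, mem_filter, mem_univ, true_and]
        right
        simpa using hne
      rw [← this]
      exact ih hpn (Nat.le_of_lt_succ hlt) (le_trans (Nat.le_succ p) hler)
    · have he : stF L r = ⟨p+1, hm⟩ := Fin.ext (le_antisymm hle hge)
      rw [he]

lemma stF_label (r : Fin n) : L (stF L r) = L r := by
  have := stF_between (L := L) r r.1 r.2 (stF_le r) le_rfl
  simpa using this.symm

lemma stF_adj {r : Fin n} (h : r.1 + 1 < n) (hL : L r = L ⟨r.1 + 1, h⟩) :
    stF L ⟨r.1 + 1, h⟩ = stF L r := by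
  apply Fin.ext
  show Nat.findGreatest (stP L) (r.1+1) = Nat.findGreatest (stP L) r.1
  rw [Nat.findGreatest_succ]
  rw [if_neg]
  rintro ⟨h', hmem⟩
  simp only [SSet, mem_filter, mem_univ, true_and] at hmem
  rcases hmem with h0 | hne
  · exact Nat.succ_ne_zero _ h0
  · apply hne
    simpa using hL

lemma stF_start {s : Fin n} (hs : s ∈ SSet L) : stF L s = s := by
  apply Fin.ext
  exact le_antisymm (Nat.findGreatest_le _) (Nat.le_findGreatest le_rfl ⟨s.2, by simpa using hs⟩)

lemma image_stF (hn : True) : Finset.image (stF L) Finset.univ = SSet L := by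
  ext s
  simp only [mem_image, mem_univ, true_and]
  constructor
  · rintro ⟨r, rfl⟩; exact stF_mem r
  · intro hs; exact ⟨s, stF_start hs⟩

lemma card_SSet_add_dSet : (SSet L).card + (dSet L).card = n := by
  classical
  have h1 : (SSet L).card + (Finset.univ.filter fun s : Fin n => ¬ (s.1 = 0 ∨
      L ⟨s.1 - 1, lt_of_le_of_lt (Nat.sub_le _ _) s.2⟩ ≠ L s)).card = n := by
    rw [SSet, Finset.card_filter_add_card_filter_not]
    simp
  have h2 : (Finset.univ.filter fun s : Fin n => ¬ (s.1 = 0 ∨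
      L ⟨s.1 - 1, lt_of_le_of_lt (Nat.sub_le _ _) s.2⟩ ≠ L s)).card = (dSet L).card := by
    refine Finset.card_bij'
      (fun t _ => (⟨t.1 - 1, lt_of_le_of_lt (Nat.sub_le _ _) t.2⟩ : Fin n))
      (fun r hr => (⟨r.1 + 1, ((Finset.mem_filter.mp hr).2).choose⟩ : Fin n)) ?_ ?_ ?_ ?_
    · intro t ht
      simp only [mem_filter, mem_univ, true_and, not_or, not_not] at ht
      obtain ⟨ht0, htL⟩ := ht
      simp only [dSet, mem_filter, mem_univ, true_and]
      refine ⟨by omega, ?_⟩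
      rw [htL]
      congr 1
      apply Fin.ext
      simp only [Fin.val_mk]
      omega
    · intro r hr
      have hr' := (Finset.mem_filter.mp hr).2
      obtain ⟨h, hL⟩ := hr'
      simp only [mem_filter, mem_univ, true_and, not_or, not_not]
      constructor
      · omega
      · have h3 : ∀ (hh : (r.1 + 1) - 1 < n), (⟨r.1 + 1 - 1, hh⟩ : Fin n) = r := by
          intro hh
          apply Fin.ext
          simp only [Fin.val_mk]
          omega
        rw [h3]
        exact hL
    · intro t ht
      simp only [mem_filter, mem_univ, true_and, not_or, not_not] at ht
      apply Fin.ext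
      simp only [Fin.val_mk]
      omega
    · intro r hr
      apply Fin.ext
      simp only [Fin.val_mk]
      omega
  omega


lemma fact_le_pow (b : ℕ) : b.factorial ≤ b ^ (b - 1) := by
  induction b with
  | zero => simp
  | succ p ih =>
    rcases Nat.eq_zero_or_pos p with rfl | hp
    · simp
    · calc (p+1).factorial = (p+1) * p.factorial := rfl
        _ ≤ (p+1) * p ^ (p-1) := Nat.mul_le_mul_left _ ih
        _ ≤ (p+1) * (p+1) ^ (p-1) := Nat.mul_le_mul_left _ (Nat.pow_le_pow_left (Nat.le_succ p) _)
        _ = (p+1) ^ (p-1+1) := by ring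
        _ = (p+1) ^ ((p+1) - 1) := by congr 1; omega

lemma fact_mul_pow_le {b k : ℕ} (hbk : b ≤ k) :
    b.factorial * (b+1) ^ (k - b) ≤ k.factorial := by
  induction k with
  | zero => interval_cases b; simp
  | succ p ih =>
    rcases Nat.lt_or_ge p b with h | h
    · have : b = p + 1 := by omega
      subst this
      simp
    · have h1 : p + 1 - b = (p - b) + 1 := by omega
      rw [h1, pow_succ, ← Nat.mul_assoc]
      calc b.factorial * (b+1) ^ (p - b) * (b+1)
          ≤ p.factorial * (b+1) := Nat.mul_le_mul_right _ (ih h)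
        _ ≤ p.factorial * (p+1) := Nat.mul_le_mul_left _ (by omega)
        _ = (p+1).factorial := (Nat.factorial_succ p).symm ▸ (Nat.mul_comm _ _)

lemma chord {b k : ℕ} (hbk : b ≤ k) :
    (b.factorial) ^ (k - 1) ≤ (k.factorial) ^ (b - 1) := by
  rcases Nat.eq_zero_or_pos b with rfl | hb
  · simp
  · have hsplit : k - 1 = (b - 1) + (k - b) := by omega
    rw [hsplit, pow_add]
    calc (b.factorial) ^ (b-1) * (b.factorial) ^ (k - b)
        ≤ (b.factorial) ^ (b-1) * (b ^ (b-1)) ^ (k - b) :=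
          Nat.mul_le_mul_left _ (Nat.pow_le_pow_left (fact_le_pow b) _)
      _ = (b.factorial) ^ (b-1) * (b ^ (k - b)) ^ (b-1) := by
          rw [← pow_mul, ← pow_mul, Nat.mul_comm (b-1) (k-b)]
      _ ≤ (b.factorial) ^ (b-1) * ((b+1) ^ (k - b)) ^ (b-1) :=
          Nat.mul_le_mul_left _ (Nat.pow_le_pow_left (Nat.pow_le_pow_left (Nat.le_succ b) _) _)
      _ = (b.factorial * (b+1) ^ (k - b)) ^ (b-1) := (mul_pow _ _ _).symm
      _ ≤ (k.factorial) ^ (b-1) := Nat.pow_le_pow_left (fact_mul_pow_le hbk) _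

lemma prodBound {k m : ℕ} (hk : 1 ≤ k) (b : Fin m → ℕ) (hbk : ∀ i, b i ≤ k)
    (hsum : ∑ i, (b i - 1) ≤ 2 * (k - 1)) :
    (∏ i, (b i).factorial) ≤ (k.factorial) ^ 2 := by
  rcases Nat.eq_or_lt_of_le hk with rfl | hk2
  · have : ∀ i, (b i).factorial = 1 := by
      intro i
      have := hbk i
      interval_cases h : b i <;> simp
    simp [this]
  · have hk1 : k - 1 ≠ 0 := by omega
    rw [← Nat.pow_le_pow_iff_left hk1]
    calc (∏ i, (b i).factorial) ^ (k-1)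
        = ∏ i, ((b i).factorial) ^ (k-1) := (Finset.prod_pow _ _ _).symm
      _ ≤ ∏ i, (k.factorial) ^ (b i - 1) := Finset.prod_le_prod' fun i _ => chord (hbk i)
      _ = (k.factorial) ^ (∑ i, (b i - 1)) := Finset.prod_pow_eq_pow_sum _ _ _
      _ ≤ (k.factorial) ^ (2 * (k-1)) :=
          Nat.pow_le_pow_right (Nat.factorial_pos k) hsum
      _ = ((k.factorial) ^ 2) ^ (k-1) := by rw [← pow_mul]

end Stmt19Aux

section Main
open Stmt19Aux Finset
open scoped Classical

variable {X : Type*} [Fintype X] [DecidableEq X] {n : ℕ} {ι : Type*} (c : X → ι)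

/-- the graph from the statement -/
def GG (c : X → ι) : SimpleGraph (X ≃ Fin n) :=
  SimpleGraph.fromRel (fun ρ ρ' : X ≃ Fin n =>
    ∃ r r' : Fin n, (r' : ℕ) = (r : ℕ) + 1 ∧
      c (ρ.symm r) = c (ρ.symm r') ∧ ρ' = ρ.trans (Equiv.swap r r'))

lemma adj_decomp {u u' : X ≃ Fin n} (h : (GG c).Adj u u') :
    ∃ a b : Fin n, (b : ℕ) = (a : ℕ) + 1 ∧ c (u.symm a) = c (u.symm b) ∧
      u' = u.trans (Equiv.swap a b) := by
  rw [GG, SimpleGraph.fromRel_adj] at h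
  obtain ⟨hne, h | h⟩ := h
  · exact h
  · obtain ⟨a, b, hab, hc, hu⟩ := h
    subst hu
    refine ⟨a, b, hab, ?_, ?_⟩
    · simp only [Equiv.symm_trans_apply, Equiv.symm_swap, Equiv.swap_apply_left,
        Equiv.swap_apply_right] at hc ⊢
      exact hc.symm
    · rw [Equiv.trans_assoc, Equiv.swap_swap]
      exact (Equiv.trans_refl _).symm

/-- the key invariant: position of each rank's run-start is preserved -/
def PP (c : X → ι) (σ₀ σ : X ≃ Fin n) : Prop :=
  ∀ r, stF (fun t => c (σ₀.symm t)) ((σ.symm.trans σ₀) r)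
      = stF (fun t => c (σ₀.symm t)) r

lemma edge_step (σ₀ : X ≃ Fin n) {u u' : X ≃ Fin n} (h : (GG c).Adj u u')
    (hP : PP c σ₀ u') : PP c σ₀ u := by
  obtain ⟨a, b, hab, hcc, hu⟩ := adj_decomp c h
  subst hu
  set L : Fin n → ι := fun t => c (σ₀.symm t) with hLdef
  have hpsi : ∀ r, ((u.trans (Equiv.swap a b)).symm.trans σ₀) r
      = (u.symm.trans σ₀) ((Equiv.swap a b) r) := by
    intro r
    simp [Equiv.symm_trans_apply]
  have hlab : ∀ r, c ((u.trans (Equiv.swap a b)).symm r) = L r := by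
    intro r
    have h1 := hP r
    calc c ((u.trans (Equiv.swap a b)).symm r)
        = L (((u.trans (Equiv.swap a b)).symm.trans σ₀) r) := by
          simp [hLdef, Equiv.symm_trans_apply]
      _ = L (stF L (((u.trans (Equiv.swap a b)).symm.trans σ₀) r)) := (stF_label _).symm
      _ = L (stF L r) := by rw [h1]
      _ = L r := stF_label _
  have e1 : c (u.symm b) = L a := by
    have := hlab a
    rwa [show (u.trans (Equiv.swap a b)).symm a = u.symm b by
      simp [Equiv.symm_trans_apply]] at this
  have e2 : c (u.symm a) = L b := by
    have := hlab b
    rwa [show (u.trans (Equiv.swap a b)).symm b = u.symm a by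
      simp [Equiv.symm_trans_apply]] at this
  have hLab : L a = L b := by rw [← e1, ← e2, hcc]
  have hst : stF L b = stF L a := by
    have h2 : (a : ℕ) + 1 < n := hab ▸ b.2
    have hbeq : b = ⟨(a : ℕ) + 1, h2⟩ := Fin.ext hab
    rw [hbeq]
    refine stF_adj h2 ?_
    rw [← hbeq]
    exact hLab
  have key : ∀ r, stF L ((u.symm.trans σ₀) ((Equiv.swap a b) r)) = stF L r := by
    intro r
    rw [← hpsi r]
    exact hP r
  intro r
  have k2 : stF L ((u.symm.trans σ₀) r) = stF L ((Equiv.swap a b) r) := by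
    have := key ((Equiv.swap a b) r)
    rwa [Equiv.swap_apply_self] at this
  rw [k2]
  rcases eq_or_ne r a with rfl | hra
  · rw [Equiv.swap_apply_left]
    exact hst
  rcases eq_or_ne r b with rfl | hrb
  · rw [Equiv.swap_apply_right]
    exact hst.symm
  · rw [Equiv.swap_apply_of_ne_of_ne hra hrb]

lemma PP_self (τ : X ≃ Fin n) : PP c τ τ := by
  intro r
  congr 1
  simp [Equiv.symm_trans_apply]

lemma reach_P {σ₀ σ : X ≃ Fin n} (h : (GG c).Reachable σ σ₀) : PP c σ₀ σ := by
  obtain ⟨w⟩ := h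
  induction w with
  | nil => exact PP_self c _
  | cons hadj p ih => exact edge_step c _ hadj ih

lemma fiber_card_le (σ₀ : X ≃ Fin n) {k : ℕ}
    (hsize : ∀ j : ι, Set.ncard {x : X | c x = j} ≤ k) (i : Fin n) :
    Fintype.card {r : Fin n // stF (fun t => c (σ₀.symm t)) r = i} ≤ k := by
  classical
  set L : Fin n → ι := fun t => c (σ₀.symm t) with hLdef
  have hinj : Function.Injective
      (fun r : {r : Fin n // stF L r = i} =>
        (⟨σ₀.symm r.1, by
          have h2 : L (stF L r.1) = L r.1 := stF_label _
          rw [r.2] at h2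
          exact h2.symm⟩ : {x : X // c x = c (σ₀.symm i)})) := by
    intro r s h
    have := congrArg Subtype.val h
    exact Subtype.ext (σ₀.symm.injective this)
  have hcard : Fintype.card {x : X // c x = c (σ₀.symm i)}
      = Set.ncard {x : X | c x = c (σ₀.symm i)} := by
    rw [← Nat.card_coe_set_eq, Nat.card_eq_fintype_card]
    apply Fintype.card_congr
    exact Equiv.subtypeEquivRight (by intro x; simp [Set.mem_setOf_eq])
  exact le_trans (Fintype.card_le_of_injective _ hinj) (hcard ▸ hsize _)

lemma sum_fiber (σ₀ : X ≃ Fin n) :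
    ∑ i : Fin n, Fintype.card {r : Fin n // stF (fun t => c (σ₀.symm t)) r = i} = n := by
  classical
  set L : Fin n → ι := fun t => c (σ₀.symm t)
  have h1 : ∀ i : Fin n, Fintype.card {r : Fin n // stF L r = i}
      = (Finset.univ.filter fun r => stF L r = i).card := fun i => Fintype.card_subtype _
  simp_rw [h1]
  rw [← Finset.card_eq_sum_card_fiberwise (f := stF L) (t := Finset.univ)
    (fun x _ => Finset.mem_univ _)]
  simp

lemma sum_sub_one (σ₀ : X ≃ Fin n) :
    ∑ i : Fin n, (Fintype.card {r : Fin n // stF (fun t => c (σ₀.symm t)) r = i} - 1)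
      = (dSet (fun t => c (σ₀.symm t))).card := by
  classical
  set L : Fin n → ι := fun t => c (σ₀.symm t) with hLdef
  set b : Fin n → ℕ := fun i => Fintype.card {r : Fin n // stF L r = i} with hbdef
  have hzero : ∀ i ∈ Finset.univ, i ∉ SSet L → b i - 1 = 0 := by
    intro i _ hi
    have : b i = 0 := by
      rw [hbdef]
      rw [Fintype.card_eq_zero_iff]
      constructor
      intro r
      exact hi (r.2 ▸ stF_mem r.1)
    omega
  have hzero' : ∀ i ∈ Finset.univ, i ∉ SSet L → b i = 0 := by
    intro i _ hi
    rw [hbdef, Fintype.card_eq_zero_iff]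
    constructor
    intro r
    exact hi (r.2 ▸ stF_mem r.1)
  have hpos : ∀ i ∈ SSet L, 1 ≤ b i := by
    intro i hi
    rw [hbdef, Nat.succ_le_iff, Fintype.card_pos_iff]
    exact ⟨⟨i, stF_start hi⟩⟩
  have e1 : ∑ i : Fin n, (b i - 1) = ∑ i ∈ SSet L, (b i - 1) :=
    (Finset.sum_subset (Finset.subset_univ _) hzero).symm
  have e2 : ∑ i : Fin n, b i = ∑ i ∈ SSet L, b i :=
    (Finset.sum_subset (Finset.subset_univ _) hzero').symm
  have e3 : ∑ i ∈ SSet L, (b i - 1) + (SSet L).card = ∑ i ∈ SSet L, b i := by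
    rw [Finset.card_eq_sum_ones, ← Finset.sum_add_distrib]
    apply Finset.sum_congr rfl
    intro i hi
    have := hpos i hi
    omega
  have e4 : ∑ i : Fin n, b i = n := sum_fiber c σ₀
  have e5 := card_SSet_add_dSet (L := L)
  show ∑ i : Fin n, (b i - 1) = (dSet L).card
  omega

lemma comp_card_le (σ₀ : X ≃ Fin n) :
    (Finset.univ.filter fun σ : X ≃ Fin n => (GG c).Reachable σ σ₀).card
      ≤ ∏ i : Fin n,
        (Fintype.card {r : Fin n // stF (fun t => c (σ₀.symm t)) r = i}).factorial := by
  classical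
  set L : Fin n → ι := fun t => c (σ₀.symm t) with hLdef
  have hcard1 : (Finset.univ.filter fun σ : X ≃ Fin n => (GG c).Reachable σ σ₀).card
      = Fintype.card {σ : X ≃ Fin n // (GG c).Reachable σ σ₀} :=
    (Fintype.card_subtype _).symm
  have hcard2 : Fintype.card
      (∀ i : Fin n, ({r : Fin n // stF L r = i} ↪ {r : Fin n // stF L r = i}))
      = ∏ i : Fin n, (Fintype.card {r : Fin n // stF L r = i}).factorial := by
    rw [Fintype.card_pi]
    apply Finset.prod_congr rfl
    intro i _
    rw [Fintype.card_embedding_eq, Nat.descFactorial_self]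
  rw [hcard1, ← hcard2]
  apply Fintype.card_le_of_injective
    (f := fun σ => fun i =>
      ⟨fun r => ⟨(σ.1.symm.trans σ₀) r.1, by
          rw [reach_P c σ.2 r.1, r.2]⟩,
        by
          intro r s hrs
          have := congrArg Subtype.val hrs
          exact Subtype.ext ((σ.1.symm.trans σ₀).injective this)⟩)
  intro σ τ h
  have hval : ∀ r : Fin n, (σ.1.symm.trans σ₀) r = (τ.1.symm.trans σ₀) r := by
    intro r
    have hi := congrFun h (stF L r)
    have := congrArg (fun (g : {r' : Fin n // stF L r' = stF L r} ↪
        {r' : Fin n // stF L r' = stF L r}) => (g ⟨r, rfl⟩).1) hi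
    exact this
  have hsymm : σ.1.symm = τ.1.symm := by
    apply Equiv.ext
    intro r
    exact σ₀.injective (hval r)
  apply Subtype.ext
  have := congrArg Equiv.symm hsymm
  simpa using this

lemma comp_bound (σ₀ : X ≃ Fin n) {k : ℕ} (hk : 1 ≤ k)
    (hsize : ∀ j : ι, Set.ncard {x : X | c x = j} ≤ k)
    (hd : (dSet (fun t => c (σ₀.symm t))).card ≤ 2 * (k - 1)) :
    (Finset.univ.filter fun σ : X ≃ Fin n => (GG c).Reachable σ σ₀).card
      ≤ k.factorial ^ 2 := by
  refine le_trans (comp_card_le c σ₀) ?_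
  apply prodBound hk _ (fun i => fiber_card_le c σ₀ hsize i)
  rw [sum_sub_one c σ₀]
  exact hd

lemma card_ne_pair {α : Type*} [Fintype α] [DecidableEq α] (x y : α) (h : x ≠ y) :
    Fintype.card {z : α // z ≠ x ∧ z ≠ y} = Fintype.card α - 2 := by
  classical
  rw [Fintype.card_subtype]
  have he : (Finset.univ.filter fun z : α => z ≠ x ∧ z ≠ y) = ({x, y} : Finset α)ᶜ := by
    ext z
    simp [not_or]
  rw [he, Finset.card_compl, Finset.card_insert_of_notMem (by simpa using h),
    Finset.card_singleton]

lemma fiber_pair_le (hcard : Fintype.card X = n) (x y : X) (r r' : Fin n)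
    (hxy : x ≠ y) (hrr : r ≠ r') :
    (Finset.univ.filter fun σ : X ≃ Fin n => σ.symm r = x ∧ σ.symm r' = y).card
      ≤ (n - 2).factorial := by
  classical
  rw [← Fintype.card_subtype]
  have happ : ∀ (σ : {σ : X ≃ Fin n // σ.symm r = x ∧ σ.symm r' = y}),
      σ.1 x = r ∧ σ.1 y = r' := by
    rintro ⟨σ', h1, h2⟩
    constructor
    · show σ' x = r
      rw [← h1]; exact Equiv.apply_symm_apply _ _
    · show σ' y = r'
      rw [← h2]; exact Equiv.apply_symm_apply _ _
  have hinj : Function.Injective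
      (fun σ : {σ : X ≃ Fin n // σ.symm r = x ∧ σ.symm r' = y} =>
        (⟨fun z : {z : X // z ≠ x ∧ z ≠ y} =>
          (⟨σ.1 z.1, by
            constructor
            · intro hz
              exact z.2.1 (σ.1.injective (hz.trans (happ σ).1.symm))
            · intro hz
              exact z.2.2 (σ.1.injective (hz.trans (happ σ).2.symm))⟩ :
            {t : Fin n // t ≠ r ∧ t ≠ r'}), by
          intro z w hzw
          have := congrArg Subtype.val hzw
          exact Subtype.ext (σ.1.injective this)⟩ :
          {z : X // z ≠ x ∧ z ≠ y} ↪ {t : Fin n // t ≠ r ∧ t ≠ r'})) := by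
    intro σ τ h
    apply Subtype.ext
    apply Equiv.ext
    intro z
    rcases eq_or_ne z x with rfl | hzx
    · rw [(happ σ).1, (happ τ).1]
    rcases eq_or_ne z y with rfl | hzy
    · rw [(happ σ).2, (happ τ).2]
    · have := congrArg (fun (g : {z : X // z ≠ x ∧ z ≠ y} ↪ {t : Fin n // t ≠ r ∧ t ≠ r'})
        => (g ⟨z, hzx, hzy⟩).1) h
      exact this
  refine le_trans (Fintype.card_le_of_injective _ hinj) ?_
  rw [Fintype.card_embedding_eq, card_ne_pair _ _ hxy, card_ne_pair _ _ hrr,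
    Fintype.card_fin, hcard, Nat.descFactorial_self]

lemma card_pairs_le (hcard : Fintype.card X = n) {k : ℕ}
    (hsize : ∀ j : ι, Set.ncard {x : X | c x = j} ≤ k) :
    (Finset.univ.filter fun p : X × X => p.1 ≠ p.2 ∧ c p.1 = c p.2).card ≤ n * (k - 1) := by
  classical
  rw [Finset.card_eq_sum_card_fiberwise (f := Prod.fst) (t := Finset.univ)
    (fun p _ => Finset.mem_univ _)]
  have hbound : ∀ x : X,
      ((Finset.univ.filter fun p : X × X => p.1 ≠ p.2 ∧ c p.1 = c p.2).filter
        fun p => p.1 = x).card ≤ k - 1 := by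
    intro x
    have hinj : ∀ p ∈ (Finset.univ.filter fun p : X × X => p.1 ≠ p.2 ∧ c p.1 = c p.2).filter
        (fun p => p.1 = x), Prod.snd p ∈ (Finset.univ.filter fun y : X => c y = c x).erase x := by
      intro p hp
      simp only [Finset.mem_filter, Finset.mem_univ, true_and] at hp
      obtain ⟨⟨hne, hcc⟩, h1⟩ := hp
      subst h1
      simp only [Finset.mem_erase, Finset.mem_filter, Finset.mem_univ, true_and]
      exact ⟨fun h => hne h.symm, hcc.symm⟩
    refine le_trans (Finset.card_le_card_of_injOn Prod.snd hinj ?_) ?_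
    · intro p hp q hq hpq
      simp only [Finset.coe_filter, Set.mem_setOf_eq] at hp hq
      exact Prod.ext (hp.2.trans hq.2.symm) hpq
    have hcc : (Finset.univ.filter fun y : X => c y = c x).card ≤ k := by
      have : (Finset.univ.filter fun y : X => c y = c x).card
          = Set.ncard {y : X | c y = c x} := by
        rw [← Nat.card_coe_set_eq, Nat.card_eq_fintype_card, Fintype.card_subtype]
        apply Finset.card_bij (fun a _ => a) <;> simp
      rw [this]
      exact hsize _
    have hmem : x ∈ Finset.univ.filter fun y : X => c y = c x := by simp
    rw [Finset.card_erase_of_mem hmem]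
    omega
  calc ∑ x : X, ((Finset.univ.filter fun p : X × X => p.1 ≠ p.2 ∧ c p.1 = c p.2).filter
        fun p => p.1 = x).card ≤ ∑ _x : X, (k-1) := Finset.sum_le_sum fun x _ => hbound x
    _ = n * (k-1) := by rw [Finset.sum_const, smul_eq_mul, Finset.card_univ, hcard]

lemma count_pair_le (hcard : Fintype.card X = n) {k : ℕ}
    (hsize : ∀ j : ι, Set.ncard {x : X | c x = j} ≤ k) (r r' : Fin n) (hrr : r ≠ r') :
    (Finset.univ.filter fun σ : X ≃ Fin n => c (σ.symm r) = c (σ.symm r')).card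
      ≤ n * (k - 1) * (n - 2).factorial := by
  classical
  rw [Finset.card_eq_sum_card_fiberwise
    (f := fun σ : X ≃ Fin n => (σ.symm r, σ.symm r'))
    (t := Finset.univ.filter fun p : X × X => p.1 ≠ p.2 ∧ c p.1 = c p.2)
    (by
      intro σ hσ
      simp only [Finset.mem_coe, Finset.mem_filter, Finset.mem_univ, true_and] at hσ ⊢
      exact ⟨fun h => hrr (σ.symm.injective h), hσ⟩)]
  calc ∑ p ∈ Finset.univ.filter fun p : X × X => p.1 ≠ p.2 ∧ c p.1 = c p.2,
        ((Finset.univ.filter fun σ : X ≃ Fin n => c (σ.symm r) = c (σ.symm r')).filter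
          fun σ => (σ.symm r, σ.symm r') = p).card
      ≤ ∑ p ∈ Finset.univ.filter fun p : X × X => p.1 ≠ p.2 ∧ c p.1 = c p.2,
        (n-2).factorial := by
        apply Finset.sum_le_sum
        intro p hp
        simp only [Finset.mem_filter, Finset.mem_univ, true_and] at hp
        refine le_trans (Finset.card_le_card ?_) (fiber_pair_le hcard p.1 p.2 r r' hp.1 hrr)
        intro σ hσ
        simp only [Finset.mem_filter, Finset.mem_univ, true_and] at hσ ⊢
        have := hσ.2
        rw [Prod.ext_iff] at this
        exact this
    _ = (Finset.univ.filter fun p : X × X => p.1 ≠ p.2 ∧ c p.1 = c p.2).card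
        * (n-2).factorial := by rw [Finset.sum_const, smul_eq_mul]
    _ ≤ n * (k - 1) * (n - 2).factorial :=
        Nat.mul_le_mul_right _ (card_pairs_le c hcard hsize)

lemma sum_dd_le (hcard : Fintype.card X = n) {k : ℕ}
    (hsize : ∀ j : ι, Set.ncard {x : X | c x = j} ≤ k) :
    ∑ σ : X ≃ Fin n, (dSet (fun t => c (σ.symm t))).card ≤ (k - 1) * n.factorial := by
  classical
  rcases Nat.lt_or_ge n 2 with hn | hn
  · have hz : ∀ σ : X ≃ Fin n, (dSet (fun t => c (σ.symm t))).card = 0 := by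
      intro σ
      rw [Finset.card_eq_zero]
      ext r
      simp only [dSet, Finset.mem_filter, Finset.mem_univ, true_and, Finset.notMem_empty,
        iff_false]
      rintro ⟨h, -⟩
      omega
    simp [hz]
  · have hterm : ∀ σ : X ≃ Fin n, (dSet (fun t => c (σ.symm t))).card
        = ∑ r : Fin n, if (∃ h : r.1 + 1 < n, c (σ.symm r) = c (σ.symm ⟨r.1+1, h⟩)) then 1 else 0 := by
      intro σ
      rw [dSet, Finset.card_filter]
    calc ∑ σ : X ≃ Fin n, (dSet (fun t => c (σ.symm t))).card
        = ∑ r : Fin n, ∑ σ : X ≃ Fin n,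
            (if (∃ h : r.1 + 1 < n, c (σ.symm r) = c (σ.symm ⟨r.1+1, h⟩)) then 1 else 0) := by
          simp_rw [hterm]
          rw [Finset.sum_comm]
      _ ≤ ∑ r : Fin n, (if r.1 + 1 < n then n * (k-1) * (n-2).factorial else 0) := by
          apply Finset.sum_le_sum
          intro r _
          by_cases h : r.1 + 1 < n
          · rw [if_pos h]
            have hiff : ∀ σ : X ≃ Fin n,
                (∃ hh : r.1+1 < n, c (σ.symm r) = c (σ.symm ⟨r.1+1, hh⟩))
                  ↔ c (σ.symm r) = c (σ.symm ⟨r.1+1, h⟩) :=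
              fun σ => ⟨fun ⟨hh, q⟩ => q, fun q => ⟨h, q⟩⟩
            simp_rw [hiff]
            rw [← Finset.card_filter]
            refine count_pair_le c hcard hsize r ⟨r.1+1, h⟩ ?_
            intro he
            have := congrArg Fin.val he
            simp only [Fin.val_mk] at this
            omega
          · rw [if_neg h]
            have : ∀ σ : X ≃ Fin n, ¬ (∃ hh : r.1 + 1 < n, c (σ.symm r) = c (σ.symm ⟨r.1+1, hh⟩)) :=
              fun σ ⟨hh, _⟩ => h hh
            simp [this]
      _ = (Finset.univ.filter fun r : Fin n => r.1 + 1 < n).card * (n * (k-1) * (n-2).factorial) := by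
          rw [Finset.sum_ite, Finset.sum_const, Finset.sum_const]
          simp [mul_comm]
      _ ≤ (k - 1) * n.factorial := by
          have hcardf : (Finset.univ.filter fun r : Fin n => r.1 + 1 < n).card = n - 1 := by
            have hneg : (Finset.univ.filter fun r : Fin n => ¬ (r.1 + 1 < n))
                = {(⟨n-1, by omega⟩ : Fin n)} := by
              ext r
              simp only [Finset.mem_filter, Finset.mem_univ, true_and, Finset.mem_singleton]
              constructor
              · intro hr
                apply Fin.ext
                simp only [Fin.val_mk]
                have := r.2
                omega
              · intro hr
                subst hr
                simp only [Fin.val_mk]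
                omega
            have htot := Finset.card_filter_add_card_filter_not
              (s := (Finset.univ : Finset (Fin n))) (p := fun r : Fin n => r.1 + 1 < n)
            rw [hneg] at htot
            simp only [Finset.card_singleton, Finset.card_univ, Fintype.card_fin] at htot
            omega
          rw [hcardf]
          obtain ⟨m, rfl⟩ : ∃ m, n = m + 2 := ⟨n - 2, by omega⟩
          have : (m+2).factorial = (m+2) * ((m+1) * m.factorial) := by
            rw [Nat.factorial_succ, Nat.factorial_succ]
          rw [this]
          have h2 : m + 2 - 1 = m + 1 := by omega
          have h3 : m + 2 - 2 = m := by omega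
          rw [h2, h3]
          ring_nf
          apply Nat.le_of_eq
          ring

end Main

open Stmt19Aux

/-- **Lower bound for problems with the partition property.** Let `X` be a finite set of size
`n` partitioned into classes (the fibers of `c : X → ι`), each of size at most `k ≥ 1`.
Consider the graph whose vertices are the rankings `ρ : X ≃ Fin n` and whose edges join `ρ`
to the ranking obtained from `ρ` by composing with the transposition of two consecutive
values `r` and `r' = r+1` such that `ρ⁻¹(r)` and `ρ⁻¹(r')` lie in the same partition class.
Then this graph has at least `n!/(2·(k!)²)` connected components. -/
theorem stmt19 (X : Type*) [Fintype X] [DecidableEq X] (n : ℕ)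
    (hcard : Fintype.card X = n) (ι : Type*) (c : X → ι) (k : ℕ) (hk : 1 ≤ k)
    (hsize : ∀ j : ι, Set.ncard {x : X | c x = j} ≤ k) :
    (n.factorial : ℝ) / (2 * (k.factorial : ℝ) ^ 2)
      ≤ Nat.card
          (SimpleGraph.fromRel (fun ρ ρ' : X ≃ Fin n =>
            ∃ r r' : Fin n, (r' : ℕ) = (r : ℕ) + 1 ∧
              c (ρ.symm r) = c (ρ.symm r') ∧
              ρ' = ρ.trans (Equiv.swap r r'))).ConnectedComponent := by
  classical
  have hcardV : Fintype.card (X ≃ Fin n) = n.factorial := by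
    rw [Fintype.card_equiv (Fintype.equivFinOfCardEq hcard), hcard]
  set B : Finset (X ≃ Fin n) := Finset.univ.filter
    (fun σ : X ≃ Fin n => (dSet (fun t => c (σ.symm t))).card ≤ 2*(k-1)) with hBdef
  set Bc : Finset (X ≃ Fin n) := Finset.univ.filter
    (fun σ : X ≃ Fin n => ¬ ((dSet (fun t => c (σ.symm t))).card ≤ 2*(k-1))) with hBcdef
  -- Markov inequality
  have hsumB : Bc.card * (2*(k-1)+1) ≤ (k-1) * n.factorial := by
    have h1 : Bc.card * (2*(k-1)+1) ≤ ∑ σ ∈ Bc, (dSet (fun t => c (σ.symm t))).card := by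
      rw [← smul_eq_mul]
      apply Finset.card_nsmul_le_sum
      intro σ hσ
      rw [hBcdef, Finset.mem_filter] at hσ
      omega
    refine le_trans h1 (le_trans ?_ (sum_dd_le c hcard hsize))
    exact Finset.sum_le_sum_of_subset (Finset.subset_univ _)
  have hsplit : B.card + Bc.card = n.factorial := by
    rw [hBdef, hBcdef, Finset.card_filter_add_card_filter_not, Finset.card_univ, hcardV]
  have hmarkov : n.factorial ≤ 2 * B.card := by
    have h2 : 2 * (Bc.card * (2*(k-1)+1)) ≤ 2 * ((k-1) * n.factorial) :=
      Nat.mul_le_mul_left _ hsumB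
    have h3 : 2 * ((k-1) * n.factorial) ≤ (2*(k-1)+1) * n.factorial := by
      have he : 2 * ((k-1) * n.factorial) = (2*(k-1)) * n.factorial := by ring
      rw [he]
      exact Nat.mul_le_mul_right _ (by omega)
    have h4 : (2*(k-1)+1) * (2 * Bc.card) ≤ (2*(k-1)+1) * n.factorial := by
      calc (2*(k-1)+1) * (2 * Bc.card) = 2 * (Bc.card * (2*(k-1)+1)) := by ring
        _ ≤ (2*(k-1)+1) * n.factorial := le_trans h2 h3
    have h5 : 2 * Bc.card ≤ n.factorial := Nat.le_of_mul_le_mul_left h4 (by omega)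
    omega
  -- component counting
  haveI instF : Fintype (GG (n := n) c).ConnectedComponent :=
    @Quotient.fintype _ _ (GG (n := n) c).reachableSetoid (fun _ _ => Classical.dec _)
  have hcomp : B.card ≤ k.factorial^2 * Nat.card ((GG (n := n) c).ConnectedComponent) := by
    refine le_trans (Finset.card_le_mul_card_image (f := (GG (n := n) c).connectedComponentMk)
      B (k.factorial^2) ?_) ?_
    · intro a ha
      obtain ⟨σ₀, hσ₀B, hmk⟩ := Finset.mem_image.mp ha
      have hd : (dSet (fun t => c (σ₀.symm t))).card ≤ 2*(k-1) := by
        rw [hBdef, Finset.mem_filter] at hσ₀B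
        exact hσ₀B.2
      refine le_trans (Finset.card_le_card ?_) (comp_bound c σ₀ hk hsize hd)
      intro σ hσ
      rw [Finset.mem_filter] at hσ
      rw [Finset.mem_filter]
      refine ⟨Finset.mem_univ _, ?_⟩
      rw [← SimpleGraph.ConnectedComponent.eq]
      rw [hσ.2, hmk]
    · rw [Nat.card_eq_fintype_card]
      exact Nat.mul_le_mul_left _ (Finset.card_le_univ _)
  have hfinal : n.factorial ≤ 2 * (k.factorial^2 * Nat.card ((GG (n := n) c).ConnectedComponent)) := by
    calc n.factorial ≤ 2 * B.card := hmarkov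
      _ ≤ 2 * (k.factorial^2 * Nat.card ((GG (n := n) c).ConnectedComponent)) :=
        Nat.mul_le_mul_left _ hcomp
  -- conclude over ℝ
  have hpos : (0:ℝ) < 2 * (k.factorial : ℝ)^2 := by positivity
  rw [div_le_iff₀ hpos]
  have hcast : (n.factorial : ℝ)
      ≤ ((2 * (k.factorial^2 * Nat.card ((GG (n := n) c).ConnectedComponent)) : ℕ) : ℝ) :=
    Nat.cast_le.mpr hfinal
  push_cast at hcast
  calc (n.factorial : ℝ)
      ≤ 2 * ((k.factorial:ℝ)^2 * (Nat.card ((GG (n := n) c).ConnectedComponent) : ℝ)) := hcast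
    _ = (Nat.card ((GG (n := n) c).ConnectedComponent) : ℝ) * (2 * (k.factorial:ℝ)^2) := by ring
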